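/- Let s>0, λ_L>0, λ_R>0 and N≥1. Define the duality function D: (0,∞)^N × ℕ_0^{N+2} → ℝ by D(y,ξ) = (1/λ_L)^{ξ_0} · (Π_{i=1}^N y_i^{ξ_i} Γ(2s)/Γ(2s+ξ_i)) · (1/λ_R)^{ξ_{N+1}}. Let 𝓛 be the generator of the integrable heat conduction model with parameters s, λ_L, λ_R, and let 𝓛^dual be the generator of the absorbing harmonic dual process. Then for all y∈(0,∞)^N and all ξ∈ℕ_0^{N+2}, (𝓛 D(·,ξ))(y) = (𝓛^dual D(y,·))(ξ). -/

import Mathlib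

open MeasureTheory Real

noncomputable section

namespace HeatModel

variable {N : ℕ}

/-- Value of the energy configuration at (0-indexed) site `i`; junk value 0 if out of range. -/
def get (y : Fin N → ℝ) (i : ℕ) : ℝ := if h : i < N then y ⟨i, h⟩ else 0

/-- Update the energy configuration at site `i` to value `v`. -/
def upd (y : Fin N → ℝ) (i : ℕ) (v : ℝ) : Fin N → ℝ := fun j => if (j : ℕ) = i then v else y j

/-- Move an amount `a` of energy from site `i` to site `j`. -/
def move (y : Fin N → ℝ) (i j : ℕ) (a : ℝ) : Fin N → ℝ :=
  upd (upd y i (get y i - a)) j (get y j + a)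

/-- Bulk Levy generator on the bond `(i, i+1)` (0-indexed sites). -/
def bulkGen (s : ℝ) (i : ℕ) (f : (Fin N → ℝ) → ℝ) (y : Fin N → ℝ) : ℝ :=
  (∫ a in Set.Ioo 0 (get y i),
      (1 - a / get y i) ^ (2 * s - 1) / a * (f (move y i (i + 1) a) - f y))
  + ∫ a in Set.Ioo 0 (get y (i + 1)),
      (1 - a / get y (i + 1)) ^ (2 * s - 1) / a * (f (move y (i + 1) i a) - f y)

/-- Left reservoir generator (acting at site `0`), with parameter `lamL`. -/
def leftGen (s lamL : ℝ) (f : (Fin N → ℝ) → ℝ) (y : Fin N → ℝ) : ℝ :=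
  (∫ a in Set.Ioo 0 (get y 0),
      (1 - a / get y 0) ^ (2 * s - 1) / a * (f (upd y 0 (get y 0 - a)) - f y))
  + ∫ a in Set.Ioi (0 : ℝ),
      Real.exp (-(lamL * a)) / a * (f (upd y 0 (get y 0 + a)) - f y)

/-- Right reservoir generator (acting at site `N-1`), with parameter `lamR`. -/
def rightGen (s lamR : ℝ) (f : (Fin N → ℝ) → ℝ) (y : Fin N → ℝ) : ℝ :=
  (∫ a in Set.Ioo 0 (get y (N - 1)),
      (1 - a / get y (N - 1)) ^ (2 * s - 1) / a *
        (f (upd y (N - 1) (get y (N - 1) - a)) - f y))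
  + ∫ a in Set.Ioi (0 : ℝ),
      Real.exp (-(lamR * a)) / a * (f (upd y (N - 1) (get y (N - 1) + a)) - f y)

/-- The full generator of the integrable heat conduction model. -/
def gen (s lamL lamR : ℝ) (f : (Fin N → ℝ) → ℝ) (y : Fin N → ℝ) : ℝ :=
  leftGen s lamL f y + (∑ i ∈ Finset.range (N - 1), bulkGen s i f y) + rightGen s lamR f y


variable {M : ℕ}

/-- Number of dual particles at (0-indexed) site `i`; junk value 0 if out of range. -/
def getN (xi : Fin M → ℕ) (i : ℕ) : ℕ := if h : i < M then xi ⟨i, h⟩ else 0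

/-- Update the dual configuration at site `i` to value `v`. -/
def updN (xi : Fin M → ℕ) (i : ℕ) (v : ℕ) : Fin M → ℕ := fun j => if (j : ℕ) = i then v else xi j

/-- Move `k` dual particles from site `i` to site `j`. -/
def moveN (xi : Fin M → ℕ) (i j k : ℕ) : Fin M → ℕ :=
  updN (updN xi i (getN xi i - k)) j (getN xi j + k)

/-- The jump rates `φ_s(k,n)` of the harmonic dual process. -/
def phi (s : ℝ) (k n : ℕ) : ℝ :=
  if 1 ≤ k ∧ k ≤ n then
    (1 / (k : ℝ)) * (Real.Gamma ((n : ℝ) + 1) * Real.Gamma ((n : ℝ) - (k : ℝ) + 2 * s)) /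
      (Real.Gamma ((n : ℝ) - (k : ℝ) + 1) * Real.Gamma ((n : ℝ) + 2 * s))
  else 0

/-- Part of the dual generator moving particles from site `i` to site `j`. -/
def dualHop (s : ℝ) (i j : ℕ) (f : (Fin M → ℕ) → ℝ) (xi : Fin M → ℕ) : ℝ :=
  ∑ k ∈ Finset.Icc 1 (getN xi i), phi s k (getN xi i) * (f (moveN xi i j k) - f xi)

/-- The generator of the absorbing harmonic dual process on sites `0,…,N+1`
(with `0` and `N+1` absorbing). -/
def dualGen (s : ℝ) (N : ℕ) (f : (Fin (N + 2) → ℕ) → ℝ) (xi : Fin (N + 2) → ℕ) : ℝ :=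
  dualHop s 1 0 f xi
    + (∑ i ∈ Finset.range (N - 1),
        (dualHop s (i + 1) (i + 2) f xi + dualHop s (i + 2) (i + 1) f xi))
    + dualHop s N (N + 1) f xi

/-- The duality function `D(y,ξ)`; the dual site `i+1` sits above the continuous site `i`. -/
def dualityFun (s lamL lamR : ℝ) (N : ℕ) (y : Fin N → ℝ) (xi : Fin (N + 2) → ℕ) : ℝ :=
  (1 / lamL) ^ (getN xi 0) *
    (∏ i : Fin N,
      y i ^ (getN xi (i.1 + 1)) *
        (Real.Gamma (2 * s) / Real.Gamma (2 * s + (getN xi (i.1 + 1) : ℝ)))) *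
    (1 / lamR) ^ (getN xi (N + 1))

open Set

/-- `∏_{i<k} (q+i)` -/
def bprod (k : ℕ) (q : ℝ) : ℝ := ∏ i ∈ Finset.range k, (q + i)

lemma bprod_pos {q : ℝ} (hq : 0 < q) (k : ℕ) : 0 < bprod k q :=
  Finset.prod_pos fun i _ => by positivity

lemma bprod_succ (k : ℕ) (q : ℝ) : bprod (k+1) q = bprod k q * (q + k) := by
  simp [bprod, Finset.prod_range_succ]

lemma bprod_succ' (k : ℕ) (q : ℝ) : bprod (k+1) q = q * bprod k (q+1) := by
  rw [bprod, Finset.prod_range_succ', bprod]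
  rw [mul_comm]
  congr 1
  · push_cast; ring
  · apply Finset.prod_congr rfl
    intro i _
    push_cast
    ring

/-- Partial fraction identity: `Σ_{i≤n} (-1)^i C(n,i)/(q+i) = n! / ∏_{i≤n}(q+i)`. -/
lemma alg1 (n : ℕ) : ∀ {q : ℝ}, 0 < q →
    ∑ i ∈ Finset.range (n+1), (-1:ℝ)^i * (n.choose i) / (q + i)
      = (n.factorial : ℝ) / bprod (n+1) q := by
  induction n with
  | zero => intro q hq; simp [bprod]
  | succ n ih =>
    intro q hq
    have hq1 : 0 < q + 1 := by linarith
    set F : ℕ → ℝ := fun j => (-1:ℝ)^j * (((n+1).choose j : ℕ) : ℝ) / (q + j) with hF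
    set G : ℕ → ℝ := fun j => (-1:ℝ)^j * ((n.choose j : ℕ) : ℝ) / (q + j) with hG
    set G' : ℕ → ℝ := fun j => (-1:ℝ)^j * ((n.choose j : ℕ) : ℝ) / ((q+1) + j) with hG'
    have hsplit : ∀ i, F (i+1) = -G' i + G (i+1) := by
      intro i
      simp only [hF, hG, hG', Nat.choose_succ_succ]
      push_cast
      have hd1 : q + ((i:ℝ)+1) ≠ 0 := by positivity
      have hd2 : (q+1) + (i:ℝ) ≠ 0 := by positivity
      field_simp
      ring
    have e1 : ∑ i ∈ Finset.range (n+2), F i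
        = (∑ i ∈ Finset.range (n+1), F (i+1)) + F 0 := Finset.sum_range_succ' F (n+1)
    have e2 : ∑ i ∈ Finset.range (n+1), G (i+1)
        = (∑ i ∈ Finset.range (n+2), G i) - G 0 := by
      rw [Finset.sum_range_succ' G (n+1)]; ring
    have e3 : ∑ i ∈ Finset.range (n+2), G i = ∑ i ∈ Finset.range (n+1), G i := by
      rw [Finset.sum_range_succ]
      simp [hG, Nat.choose_succ_self]
    have e4 : ∑ i ∈ Finset.range (n+1), F (i+1)
        = -(∑ i ∈ Finset.range (n+1), G' i) + ∑ i ∈ Finset.range (n+1), G (i+1) := by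
      rw [← Finset.sum_neg_distrib, ← Finset.sum_add_distrib]
      exact Finset.sum_congr rfl fun i _ => hsplit i
    have eF0 : F 0 = 1/q := by simp [hF]
    have eG0 : G 0 = 1/q := by simp [hG]
    have ihq := ih hq
    have ihq1 := ih hq1
    have hrel : bprod (n+1) q * (q + ((n+1:ℕ):ℝ)) = q * bprod (n+1) (q+1) := by
      rw [← bprod_succ, ← bprod_succ']
    have hbp : bprod (n+1+1) q = bprod (n+1) q * (q + ((n+1:ℕ):ℝ)) := bprod_succ (n+1) q
    have hfac : (((n+1).factorial : ℕ) : ℝ) = ((n:ℝ)+1) * (n.factorial : ℝ) := by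
      rw [Nat.factorial_succ]; push_cast; ring
    rw [e1, e4, e2, e3, eF0, eG0, ihq, ihq1]
    rw [show bprod (n+1+1) q = bprod (n+1) q * (q + ((n+1:ℕ):ℝ)) from hbp, hfac]
    set A := bprod (n+1) q
    set B := bprod (n+1) (q+1)
    have hA : (0:ℝ) < A := bprod_pos hq _
    have hB : (0:ℝ) < B := bprod_pos hq1 _
    have hc : (0:ℝ) < q + ((n+1:ℕ):ℝ) := by positivity
    have key2 : (↑n.factorial:ℝ)/A - ↑n.factorial/B
        = ((n:ℝ)+1) * ↑n.factorial / (A * (q + ((n+1:ℕ):ℝ))) := by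
      rw [div_sub_div _ _ hA.ne' hB.ne', div_eq_div_iff (by positivity) (by positivity)]
      push_cast at hrel ⊢
      linear_combination (-(↑n.factorial:ℝ) * A) * hrel
    linear_combination key2

lemma Gamma_add_nat' {q : ℝ} (hq : 0 < q) (n : ℕ) :
    Real.Gamma (q + n) = bprod n q * Real.Gamma q := by
  induction n with
  | zero => simp [bprod]
  | succ n ih =>
    have h1 : q + ((n+1:ℕ):ℝ) = (q + n) + 1 := by push_cast; ring
    have h2 : q + (n:ℝ) ≠ 0 := by positivity
    rw [h1, Real.Gamma_add_one h2, ih, bprod_succ]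
    ring

/-- The factor `Γ(2s)/Γ(2s+m)` in the duality function. -/
def dfac (s : ℝ) (m : ℕ) : ℝ := Real.Gamma (2*s) / Real.Gamma (2*s + m)

lemma dfac_pos {s : ℝ} (hs : 0 < s) (m : ℕ) : 0 < dfac s m := by
  have h1 : (0:ℝ) < 2*s := by linarith
  have h2 : (0:ℝ) < 2*s + m := by positivity
  exact div_pos (Real.Gamma_pos_of_pos h1) (Real.Gamma_pos_of_pos h2)

/-- The Beta-integral value `(k-1)! / ∏_{i<k}(q+i)`. -/
def bcoef (k : ℕ) (q : ℝ) : ℝ := ((k-1).factorial : ℝ) / bprod k q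

/-- KEY0 : `B(k, 2s+m) · d(m) = (k-1)! · d(m+k)`. -/
lemma bcoef_mul_dfac {s : ℝ} (hs : 0 < s) (m k : ℕ) :
    bcoef k (2*s + m) * dfac s m = ((k-1).factorial : ℝ) * dfac s (m+k) := by
  have h2s : (0:ℝ) < 2*s := by linarith
  have hqm : (0:ℝ) < 2*s + m := by positivity
  have hGm : (0:ℝ) < Real.Gamma (2*s + m) := Real.Gamma_pos_of_pos hqm
  have hGmk : Real.Gamma (2*s + ((m+k:ℕ):ℝ)) = bprod k (2*s + m) * Real.Gamma (2*s + m) := by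
    have : 2*s + ((m+k:ℕ):ℝ) = (2*s + m) + k := by push_cast; ring
    rw [this, Gamma_add_nat' hqm]
  have hbp : (0:ℝ) < bprod k (2*s+m) := bprod_pos hqm _
  rw [bcoef, dfac, dfac, hGmk]
  field_simp

lemma phi_eq {s : ℝ} (hs : 0 < s) {k n : ℕ} (hk : 1 ≤ k) (hkn : k ≤ n) :
    phi s k n = (n.choose k : ℝ) * bcoef k (2*s + ((n - k : ℕ):ℝ)) := by
  have h2s : (0:ℝ) < 2*s := by linarith
  rw [phi, if_pos ⟨hk, hkn⟩]
  have hsub : (n:ℝ) - (k:ℝ) = ((n - k : ℕ):ℝ) := by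
    rw [Nat.cast_sub hkn]
  rw [hsub]
  have hq : (0:ℝ) < 2*s + ((n-k:ℕ):ℝ) := by positivity
  have hGn1 : Real.Gamma ((n:ℝ) + 1) = (n.factorial : ℝ) := Real.Gamma_nat_eq_factorial n
  have hGnk1 : Real.Gamma (((n-k:ℕ):ℝ) + 1) = ((n-k).factorial : ℝ) :=
    Real.Gamma_nat_eq_factorial (n-k)
  have hGg : Real.Gamma ((n:ℝ) + 2*s)
      = bprod k (2*s + ((n-k:ℕ):ℝ)) * Real.Gamma (2*s + ((n-k:ℕ):ℝ)) := by
    have h1 : (n:ℝ) + 2*s = (2*s + ((n-k:ℕ):ℝ)) + (k:ℝ) := by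
      have : (n:ℝ) = ((n-k:ℕ):ℝ) + k := by rw [← hsub]; ring
      rw [this]; ring
    rw [h1, Gamma_add_nat' hq]
  have hGs : Real.Gamma (((n-k:ℕ):ℝ) + 2*s) = Real.Gamma (2*s + ((n-k:ℕ):ℝ)) := by ring_nf
  rw [hGn1, hGnk1, hGg, hGs, bcoef]
  have hfacs : (n.factorial : ℝ) = (n.choose k : ℝ) * ((k:ℝ) * ((k-1).factorial:ℝ)) * ((n-k).factorial : ℝ) := by
    have h1 : k.factorial = k * (k-1).factorial := by
      obtain ⟨k', rfl⟩ := Nat.exists_eq_add_of_le hk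
      simp [Nat.factorial_succ, Nat.add_comm 1 k']
    have := Nat.choose_mul_factorial_mul_factorial hkn
    rw [← this, h1]
    push_cast; ring
  rw [hfacs]
  have hk0 : (0:ℝ) < (k:ℝ) := by exact_mod_cast hk
  have hnkf : (0:ℝ) < ((n-k).factorial : ℝ) := by exact_mod_cast (n-k).factorial_pos
  have hG1 : (0:ℝ) < Real.Gamma (2*s + ((n-k:ℕ):ℝ)) := Real.Gamma_pos_of_pos hq
  have hbp : (0:ℝ) < bprod k (2*s + ((n-k:ℕ):ℝ)) := bprod_pos hq _
  have e1 : ((k:ℝ)) ≠ 0 := hk0.ne'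
  have e2 : ((n-k).factorial : ℝ) ≠ 0 := hnkf.ne'
  have e3 : Real.Gamma (2*s + ((n-k:ℕ):ℝ)) ≠ 0 := hG1.ne'
  have e4 : bprod k (2*s + ((n-k:ℕ):ℝ)) ≠ 0 := hbp.ne'
  field_simp

/-- KEY2 : `φ(k,n) · d(n-k) = C(n,k) (k-1)! d(n)`. -/
lemma phi_mul_dfac_sub {s : ℝ} (hs : 0 < s) {k n : ℕ} (hk : 1 ≤ k) (hkn : k ≤ n) :
    phi s k n * dfac s (n-k) = (n.choose k : ℝ) * ((k-1).factorial : ℝ) * dfac s n := by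
  rw [phi_eq hs hk hkn, mul_assoc, bcoef_mul_dfac hs (n-k) k, Nat.sub_add_cancel hkn]
  ring

/-- KEY1 : matching of the gain terms across the bond. -/
lemma key_bond {s : ℝ} (hs : 0 < s) {k n : ℕ} (m : ℕ) (hk : 1 ≤ k) (hkn : k ≤ n) :
    dfac s m * dfac s n * ((n.choose k : ℝ) * bcoef k (2*s + (m:ℝ)))
      = phi s k n * (dfac s (m+k) * dfac s (n-k)) := by
  have h1 := bcoef_mul_dfac hs m k
  have h2 := phi_mul_dfac_sub hs hk hkn
  have h3 : phi s k n * (dfac s (m+k) * dfac s (n-k))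
      = (phi s k n * dfac s (n-k)) * dfac s (m+k) := by ring
  rw [h3, h2]
  calc dfac s m * dfac s n * ((n.choose k : ℝ) * bcoef k (2*s + (m:ℝ)))
      = (bcoef k (2*s + (m:ℝ)) * dfac s m) * dfac s n * (n.choose k : ℝ) := by ring
    _ = (((k-1).factorial : ℝ) * dfac s (m+k)) * dfac s n * (n.choose k : ℝ) := by rw [h1]
    _ = (n.choose k : ℝ) * ((k-1).factorial : ℝ) * dfac s n * dfac s (m+k) := by ring

/-- Generic evaluation of an integral by decomposing the integrand as a finite
sum of integrable pieces with known integrals. -/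
lemma integral_eq_sum {X : Set ℝ} (hX : MeasurableSet X) {ι : Type*} (T : Finset ι)
    (g : ι → ℝ → ℝ) (v : ι → ℝ) (f : ℝ → ℝ)
    (hg : ∀ t ∈ T, IntegrableOn (g t) X volume)
    (hf : ∀ a ∈ X, f a = ∑ t ∈ T, g t a)
    (hv : ∀ t ∈ T, ∫ a in X, g t a = v t) :
    IntegrableOn f X volume ∧ ∫ a in X, f a = ∑ t ∈ T, v t := by
  constructor
  · exact IntegrableOn.congr_fun (integrable_finset_sum T hg)
      (fun a ha => (hf a ha).symm) hX
  · rw [setIntegral_congr_fun hX hf, integral_finset_sum T hg]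
    exact Finset.sum_congr rfl hv

lemma integrable_base {p x : ℝ} (hp : -1 < p) (hx : 0 < x) :
    IntegrableOn (fun a : ℝ => (1 - a / x) ^ p) (Set.Ioo 0 x) volume := by
  have h1 : IntervalIntegrable (fun t : ℝ => t ^ p) volume 0 1 :=
    intervalIntegral.intervalIntegrable_rpow' hp
  have h2 : IntervalIntegrable (fun t : ℝ => (1 - t) ^ p) volume 0 1 := by
    have := (h1.comp_sub_left 1).symm
    norm_num at this
    exact this
  have h3 : IntervalIntegrable (fun a : ℝ => (1 - a * (1/x)) ^ p) volume 0 x := by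
    have := h2.comp_mul_right (c := 1/x)
    have hx' : (1:ℝ)/(1/x) = x := by field_simp
    simpa [hx'] using this
  have h4 : IntervalIntegrable (fun a : ℝ => (1 - a / x) ^ p) volume 0 x := by
    simpa [div_eq_mul_inv, one_div] using h3
  rw [intervalIntegrable_iff, uIoc_of_le hx.le] at h4
  exact h4.mono_set Set.Ioo_subset_Ioc_self

lemma integral_base {p x : ℝ} (hp : -1 < p) (hx : 0 < x) :
    ∫ a in Set.Ioo 0 x, (1 - a / x) ^ p = x / (p + 1) := by
  rw [← integral_Ioc_eq_integral_Ioo, ← intervalIntegral.integral_of_le hx.le]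
  have h1 : ∫ a in (0:ℝ)..x, (1 - a / x) ^ p
      = x • ∫ u in (0:ℝ)..(1:ℝ), (1 - u) ^ p := by
    have := intervalIntegral.integral_comp_div (a := 0) (b := x)
      (fun u : ℝ => (1 - u) ^ p) hx.ne'
    simp only [zero_div, div_self hx.ne'] at this
    exact this
  have h2 : ∫ u in (0:ℝ)..(1:ℝ), (1 - u) ^ p = ∫ t in (0:ℝ)..(1:ℝ), t ^ p := by
    have := intervalIntegral.integral_comp_sub_left (a := 0) (b := 1)
      (fun t : ℝ => t ^ p) 1
    norm_num at this
    exact this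
  rw [h1, h2, integral_rpow (Or.inl hp)]
  simp [smul_eq_mul]
  rw [Real.zero_rpow (by linarith : p + 1 ≠ 0)]
  ring

lemma ev_piece {q x : ℝ} (hq : 0 < q) (hx : 0 < x) (K : ℕ) :
    IntegrableOn (fun a : ℝ => a^K * (1 - a/x)^(q-1)) (Set.Ioo 0 x) volume ∧
    ∫ a in Set.Ioo 0 x, a^K * (1 - a/x)^(q-1) = x^(K+1) * bcoef (K+1) q := by
  have key := integral_eq_sum (X := Set.Ioo 0 x) measurableSet_Ioo (Finset.range (K+1))
    (fun i a => (x^K * (K.choose i:ℝ) * (-1:ℝ)^i) * (1 - a/x)^(q - 1 + (i:ℝ)))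
    (fun i => (x^K * (K.choose i:ℝ) * (-1:ℝ)^i) * (x / (q + (i:ℝ))))
    (fun a => a^K * (1 - a/x)^(q-1)) ?_ ?_ ?_
  · refine ⟨key.1, ?_⟩
    rw [key.2]
    have : ∀ i ∈ Finset.range (K+1),
        (x^K * (K.choose i:ℝ) * (-1:ℝ)^i) * (x / (q + (i:ℝ)))
          = x^(K+1) * ((-1:ℝ)^i * (K.choose i:ℝ) / (q + (i:ℝ))) := by
      intro i _; rw [pow_succ]; ring
    rw [Finset.sum_congr rfl this, ← Finset.mul_sum, alg1 K hq, bcoef]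
    norm_num
  · intro i _
    have hp : (-1:ℝ) < q - 1 + (i:ℝ) := by
      have : (0:ℝ) ≤ (i:ℝ) := Nat.cast_nonneg i
      linarith
    exact (integrable_base hp hx).const_mul _
  · intro a ha
    obtain ⟨ha0, hax⟩ := ha
    have hb : 0 < 1 - a/x := by
      have : a/x < 1 := (div_lt_one hx).2 hax
      linarith
    have hpow : (a/x)^K
        = ∑ i ∈ Finset.range (K+1), (K.choose i:ℝ) * (-1:ℝ)^i * (1-a/x)^i := by
      have h1 : (a/x) = -(1-a/x) + 1 := by ring
      rw [h1, add_pow]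
      refine Finset.sum_congr rfl fun i _ => ?_
      rw [neg_pow]
      ring
    have haK : a^K = x^K * (a/x)^K := by
      rw [← mul_pow]
      congr 1
      field_simp
    have hsplit : ∀ i : ℕ, (1 - a/x)^(q - 1 + (i:ℝ)) = (1-a/x)^(q-1) * (1-a/x)^i := by
      intro i
      rw [Real.rpow_add hb, Real.rpow_natCast]
    calc a^K * (1 - a/x)^(q-1)
        = ∑ i ∈ Finset.range (K+1),
            (x^K * (K.choose i:ℝ) * (-1:ℝ)^i) * ((1-a/x)^(q-1) * (1-a/x)^i) := by
          rw [haK, hpow, Finset.mul_sum, Finset.sum_mul]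
          refine Finset.sum_congr rfl fun i _ => ?_
          ring
      _ = ∑ i ∈ Finset.range (K+1),
            (x^K * (K.choose i:ℝ) * (-1:ℝ)^i) * (1 - a/x)^(q - 1 + (i:ℝ)) := by
          refine Finset.sum_congr rfl fun i _ => ?_
          rw [hsplit i]
  · intro i _
    have hp : (-1:ℝ) < q - 1 + (i:ℝ) := by
      have : (0:ℝ) ≤ (i:ℝ) := Nat.cast_nonneg i
      linarith
    rw [MeasureTheory.integral_const_mul, integral_base hp hx]
    congr 2
    ring

lemma ev_bulk {s x : ℝ} (z : ℝ) (hs : 0 < s) (hx : 0 < x) (m n : ℕ) :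
    ∫ a in Set.Ioo 0 x, (1 - a/x)^(2*s-1)/a * ((x-a)^m * (z+a)^n - x^m*z^n)
      = (∑ K ∈ Finset.range n,
          (n.choose (K+1):ℝ) * z^(n-(K+1)) * x^(m+(K+1)) * bcoef (K+1) (2*s + (m:ℝ)))
        - x^m*z^n * ∑ j ∈ Finset.range m, 1/(2*s + (j:ℝ)) := by
  have hq : (0:ℝ) < 2*s + (m:ℝ) := by positivity
  have key := integral_eq_sum (X := Set.Ioo 0 x) measurableSet_Ioo
    ((Finset.range n).disjSum (Finset.range m))
    (Sum.elim
      (fun K a => ((n.choose (K+1):ℝ) * z^(n-(K+1)) * x^m)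
        * (a^K * (1 - a/x)^((2*s + (m:ℝ))-1)))
      (fun j a => (-(z^n * x^m / x)) * (1 - a/x)^((2*s-1) + (j:ℝ))))
    (Sum.elim
      (fun K => ((n.choose (K+1):ℝ) * z^(n-(K+1)) * x^m)
        * (x^(K+1) * bcoef (K+1) (2*s + (m:ℝ))))
      (fun j => (-(z^n * x^m / x)) * (x/(2*s + (j:ℝ)))))
    (fun a => (1 - a/x)^(2*s-1)/a * ((x-a)^m * (z+a)^n - x^m*z^n)) ?_ ?_ ?_
  · rw [key.2, Finset.sum_disjSum]
    congr 1
    · refine Finset.sum_congr rfl fun K _ => ?_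
      simp only [Sum.elim_inl]
      rw [pow_add]
      ring
    · have : ∀ j ∈ Finset.range m,
          (Sum.elim
            (fun (K:ℕ) => ((n.choose (K+1):ℝ) * z^(n-(K+1)) * x^m)
              * (x^(K+1) * bcoef (K+1) (2*s + (m:ℝ))))
            (fun (j:ℕ) => (-(z^n * x^m / x)) * (x/(2*s + (j:ℝ)))) (Sum.inr j) : ℝ)
            = -(x^m * z^n * (1/(2*s + (j:ℝ)))) := by
        intro j _
        simp only [Sum.elim_inr]
        field_simp
      rw [Finset.sum_congr rfl this]
      simp only [Finset.sum_neg_distrib, Finset.mul_sum]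
  · rintro (K | j) _
    · exact ((ev_piece hq hx K).1).const_mul _
    · have hp : (-1:ℝ) < (2*s-1) + (j:ℝ) := by
        have : (0:ℝ) ≤ (j:ℝ) := Nat.cast_nonneg j
        linarith
      exact (integrable_base hp hx).const_mul _
  · intro a ha
    obtain ⟨ha0, hax⟩ := ha
    have hb : 0 < 1 - a/x := by
      have : a/x < 1 := (div_lt_one hx).2 hax
      linarith
    have hxa : x - a = x*(1 - a/x) := by field_simp
    have hbinom : (z+a)^n = z^n + ∑ K ∈ Finset.range n,
        (n.choose (K+1):ℝ) * z^(n-(K+1)) * a^(K+1) := by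
      rw [show z+a = a+z from add_comm z a, add_pow, Finset.sum_range_succ' _ n]
      simp only [pow_zero, one_mul, Nat.choose_zero_right, Nat.cast_one, mul_one, Nat.sub_zero]
      rw [add_comm]
      congr 1
      refine Finset.sum_congr rfl fun K _ => ?_
      ring
    have e1 : ∀ K : ℕ, (1-a/x)^((2*s + (m:ℝ))-1) = (1-a/x)^(2*s-1) * (1-a/x)^m := by
      intro K
      rw [show (2*s+(m:ℝ))-1 = (2*s-1)+(m:ℝ) by ring, Real.rpow_add hb, Real.rpow_natCast]
    have e2 : ∀ j : ℕ, (1-a/x)^((2*s-1) + (j:ℝ)) = (1-a/x)^(2*s-1) * (1-a/x)^j := by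
      intro j
      rw [Real.rpow_add hb, Real.rpow_natCast]
    rw [Finset.sum_disjSum]
    simp only [Sum.elim_inl, Sum.elim_inr]
    have main : (x-a)^m * (z+a)^n - x^m*z^n
        = ((∑ K ∈ Finset.range n, ((n.choose (K+1):ℝ) * z^(n-(K+1)) * x^m)
              * (a^K * (1-a/x)^m))
           + ∑ j ∈ Finset.range m, (-(z^n * x^m / x)) * (1-a/x)^j) * a := by
      have eq1 : x^m*(1-a/x)^m * (∑ K ∈ Finset.range n,
            (n.choose (K+1):ℝ) * z^(n-(K+1)) * a^(K+1))
          = (∑ K ∈ Finset.range n, ((n.choose (K+1):ℝ) * z^(n-(K+1)) * x^m)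
              * (a^K * (1-a/x)^m)) * a := by
        rw [Finset.mul_sum, Finset.sum_mul]
        refine Finset.sum_congr rfl fun K _ => ?_
        rw [pow_succ]
        ring
      have eq2 : x^m*z^n*((1-a/x)^m - 1)
          = (∑ j ∈ Finset.range m, (-(z^n * x^m / x)) * (1-a/x)^j) * a := by
        rw [← geom_sum_mul (1-a/x) m, Finset.sum_mul, Finset.sum_mul, Finset.mul_sum]
        refine Finset.sum_congr rfl fun j _ => ?_
        field_simp
        ring
      calc (x-a)^m * (z+a)^n - x^m*z^n
          = x^m*(1-a/x)^m * (∑ K ∈ Finset.range n,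
              (n.choose (K+1):ℝ) * z^(n-(K+1)) * a^(K+1))
            + x^m*z^n*((1-a/x)^m - 1) := by
            rw [hxa, mul_pow, hbinom]; ring
        _ = _ := by rw [eq1, eq2, ← add_mul]
    calc (1 - a/x)^(2*s-1)/a * ((x-a)^m * (z+a)^n - x^m*z^n)
        = (1 - a/x)^(2*s-1) * (((x-a)^m * (z+a)^n - x^m*z^n)/a) := by ring
      _ = (1 - a/x)^(2*s-1) * ((∑ K ∈ Finset.range n,
              ((n.choose (K+1):ℝ) * z^(n-(K+1)) * x^m) * (a^K * (1-a/x)^m))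
           + ∑ j ∈ Finset.range m, (-(z^n * x^m / x)) * (1-a/x)^j) := by
          rw [main, mul_div_cancel_right₀ _ ha0.ne']
      _ = _ := by
          rw [mul_add, Finset.mul_sum, Finset.mul_sum]
          congr 1
          · refine Finset.sum_congr rfl fun K _ => ?_
            rw [e1 K]; ring
          · refine Finset.sum_congr rfl fun j _ => ?_
            rw [e2 j]; ring
  · rintro (K | j) _
    · simp only [Sum.elim_inl]
      rw [MeasureTheory.integral_const_mul, (ev_piece hq hx K).2]
    · simp only [Sum.elim_inr]
      have hp : (-1:ℝ) < (2*s-1) + (j:ℝ) := by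
        have : (0:ℝ) ≤ (j:ℝ) := Nat.cast_nonneg j
        linarith
      rw [MeasureTheory.integral_const_mul, integral_base hp hx]
      congr 2
      ring

lemma ev_loss {s x : ℝ} (hs : 0 < s) (hx : 0 < x) (m : ℕ) :
    ∫ a in Set.Ioo 0 x, (1 - a/x)^(2*s-1)/a * ((x-a)^m - x^m)
      = -(x^m * ∑ j ∈ Finset.range m, 1/(2*s + (j:ℝ))) := by
  have h := ev_bulk (z := 1) hs hx m 0
  simpa using h

lemma sum_Icc_one (F : ℕ → ℝ) (n : ℕ) :
    ∑ k ∈ Finset.Icc 1 n, F k = ∑ K ∈ Finset.range n, F (K+1) := by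
  rw [← Finset.Ico_add_one_right_eq_Icc, Finset.sum_Ico_eq_sum_range]
  simp [add_comm]

lemma alg2 {s : ℝ} (hs : 0 < s) (m : ℕ) :
    ∑ k ∈ Finset.Icc 1 m, phi s k m = ∑ j ∈ Finset.range m, 1/(2*s + (j:ℝ)) := by
  have h1 := ev_loss hs one_pos m
  have key := integral_eq_sum (X := Set.Ioo 0 1) measurableSet_Ioo (Finset.range m)
    (fun K a => (-(m.choose (K+1):ℝ))
      * (a^K * (1 - a/1)^((2*s + ((m-(K+1):ℕ):ℝ)) - 1)))
    (fun K => (-(m.choose (K+1):ℝ))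
      * ((1:ℝ)^(K+1) * bcoef (K+1) (2*s + ((m-(K+1):ℕ):ℝ))))
    (fun a => (1 - a/1)^(2*s-1)/a * ((1-a)^m - 1^m)) ?_ ?_ ?_
  · have h2 := key.2
    rw [h1] at h2
    have h3 : ∀ K ∈ Finset.range m,
        (-(m.choose (K+1):ℝ)) * ((1:ℝ)^(K+1) * bcoef (K+1) (2*s + ((m-(K+1):ℕ):ℝ)))
          = -(phi s (K+1) m) := by
      intro K hK
      rw [Finset.mem_range] at hK
      rw [phi_eq hs (Nat.le_add_left 1 K) hK]
      simp
    rw [Finset.sum_congr rfl h3, Finset.sum_neg_distrib] at h2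
    simp only [one_pow, one_mul] at h2
    rw [sum_Icc_one]
    linarith [neg_injective h2]
  · intro K hK
    rw [Finset.mem_range] at hK
    have hq : (0:ℝ) < 2*s + ((m-(K+1):ℕ):ℝ) := by positivity
    exact ((ev_piece hq one_pos K).1).const_mul _
  · intro a ha
    obtain ⟨ha0, ha1⟩ := ha
    have hb : 0 < 1 - a := by linarith
    show (1 - a/1)^(2*s-1)/a * ((1-a)^m - 1^m)
      = ∑ t ∈ Finset.range m, (-(m.choose (t+1):ℝ))
          * (a^t * (1 - a/1)^((2*s + ((m-(t+1):ℕ):ℝ)) - 1))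
    have hbinom : (1-a)^m - 1^m
        = -(∑ K ∈ Finset.range m, (m.choose (K+1):ℝ) * a^(K+1) * (1-a)^(m-(K+1))) := by
      have h4 : (a + (1-a))^m = 1 := by norm_num
      rw [add_pow, Finset.sum_range_succ' _ m] at h4
      simp only [pow_zero, one_mul, Nat.choose_zero_right, Nat.cast_one, mul_one,
        Nat.sub_zero] at h4
      have : (1-a)^m = 1 - ∑ K ∈ Finset.range m,
          a^(K+1) * (1-a)^(m-(K+1)) * ((m.choose (K+1):ℕ):ℝ) := by linarith
      rw [one_pow, this]
      rw [← Finset.sum_neg_distrib]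
      have h5 : (1 : ℝ) - (∑ K ∈ Finset.range m,
          a^(K+1) * (1-a)^(m-(K+1)) * ((m.choose (K+1):ℕ):ℝ)) - 1
          = -(∑ K ∈ Finset.range m, a^(K+1) * (1-a)^(m-(K+1)) * ((m.choose (K+1):ℕ):ℝ)) := by
        ring
      rw [h5, ← Finset.sum_neg_distrib]
      refine Finset.sum_congr rfl fun K _ => ?_
      ring
    rw [hbinom]
    simp only [div_one]
    rw [mul_neg, Finset.mul_sum, ← Finset.sum_neg_distrib]
    refine Finset.sum_congr rfl fun K _ => ?_
    have he : (1-a)^((2*s + ((m-(K+1):ℕ):ℝ)) - 1) = (1-a)^(2*s-1) * (1-a)^(m-(K+1)) := by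
      rw [show (2*s + ((m-(K+1):ℕ):ℝ)) - 1 = (2*s-1) + ((m-(K+1):ℕ):ℝ) by ring,
        Real.rpow_add hb, Real.rpow_natCast]
    rw [he, pow_succ]
    field_simp
  · intro K hK
    rw [Finset.mem_range] at hK
    have hq : (0:ℝ) < 2*s + ((m-(K+1):ℕ):ℝ) := by positivity
    rw [MeasureTheory.integral_const_mul, (ev_piece hq one_pos K).2]

lemma integrable_exp_piece {lam : ℝ} (hlam : 0 < lam) (K : ℕ) :
    IntegrableOn (fun a : ℝ => a^K * Real.exp (-(lam*a))) (Set.Ioi 0) volume := by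
  have h0 : (0:ℝ) < (K:ℝ) + 1 := by positivity
  have h1 : IntegrableOn (fun t : ℝ => Real.exp (-t) * t ^ (((K:ℝ)+1) - 1)) (Set.Ioi 0) volume :=
    Real.GammaIntegral_convergent h0
  have h2 : IntegrableOn (fun x : ℝ => Real.exp (-(lam*x)) * (lam*x) ^ (((K:ℝ)+1) - 1))
      (Set.Ioi 0) volume := by
    have := (integrableOn_Ioi_comp_mul_left_iff
      (fun t : ℝ => Real.exp (-t) * t ^ (((K:ℝ)+1) - 1)) 0 hlam).2
    simpa using this (by simpa using h1)
  have h3 := (h2.const_mul ((1:ℝ)/lam^K))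
  refine IntegrableOn.congr_fun h3 ?_ measurableSet_Ioi
  intro a ha
  rw [Set.mem_Ioi] at ha
  have hla : 0 < lam * a := by positivity
  have he : (lam*a) ^ (((K:ℝ)+1) - 1) = lam^K * a^K := by
    rw [show ((K:ℝ)+1) - 1 = ((K:ℕ):ℝ) by ring, Real.rpow_natCast, mul_pow]
  show 1/lam^K * (Real.exp (-(lam*a)) * (lam*a) ^ (((K:ℝ)+1) - 1))
      = a^K * Real.exp (-(lam*a))
  rw [he]
  field_simp

lemma ev_exp_piece {lam : ℝ} (hlam : 0 < lam) (K : ℕ) :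
    ∫ a in Set.Ioi 0, a^K * Real.exp (-(lam*a)) = (K.factorial : ℝ) * (1/lam)^(K+1) := by
  have h := integral_rpow_mul_exp_neg_mul_Ioi (a := ((K:ℝ)+1)) (r := lam) (by positivity) hlam
  have h2 : ∫ a in Set.Ioi 0, a^K * Real.exp (-(lam*a))
      = ∫ t in Set.Ioi (0:ℝ), t ^ (((K:ℝ)+1) - 1) * Real.exp (-(lam*t)) := by
    refine setIntegral_congr_fun measurableSet_Ioi fun t ht => ?_
    rw [Set.mem_Ioi] at ht
    rw [show ((K:ℝ)+1) - 1 = ((K:ℕ):ℝ) by ring, Real.rpow_natCast]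
  rw [h2, h, Real.Gamma_nat_eq_factorial,
    show ((K:ℝ)+1) = (((K+1:ℕ)):ℝ) by push_cast; ring, Real.rpow_natCast]
  ring

lemma ev_gain {lam : ℝ} (x : ℝ) (hlam : 0 < lam) (m : ℕ) :
    ∫ a in Set.Ioi 0, Real.exp (-(lam*a))/a * ((x+a)^m - x^m)
      = ∑ K ∈ Finset.range m,
          (m.choose (K+1):ℝ) * x^(m-(K+1)) * (K.factorial:ℝ) * (1/lam)^(K+1) := by
  have key := integral_eq_sum (X := Set.Ioi 0) measurableSet_Ioi (Finset.range m)
    (fun K a => ((m.choose (K+1):ℝ) * x^(m-(K+1))) * (a^K * Real.exp (-(lam*a))))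
    (fun K => ((m.choose (K+1):ℝ) * x^(m-(K+1))) * ((K.factorial : ℝ) * (1/lam)^(K+1)))
    (fun a => Real.exp (-(lam*a))/a * ((x+a)^m - x^m)) ?_ ?_ ?_
  · rw [key.2]
    exact Finset.sum_congr rfl fun K _ => by ring
  · intro K _
    exact (integrable_exp_piece hlam K).const_mul _
  · intro a ha
    rw [Set.mem_Ioi] at ha
    show Real.exp (-(lam*a))/a * ((x+a)^m - x^m)
      = ∑ K ∈ Finset.range m,
          ((m.choose (K+1):ℝ) * x^(m-(K+1))) * (a^K * Real.exp (-(lam*a)))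
    have hbinom : (x+a)^m - x^m = ∑ K ∈ Finset.range m,
        (m.choose (K+1):ℝ) * x^(m-(K+1)) * a^(K+1) := by
      rw [show x+a = a+x from add_comm x a, add_pow, Finset.sum_range_succ' _ m]
      simp only [pow_zero, one_mul, Nat.choose_zero_right, Nat.cast_one, mul_one, Nat.sub_zero]
      rw [add_sub_cancel_right]
      refine Finset.sum_congr rfl fun K _ => ?_
      ring
    rw [hbinom, Finset.mul_sum]
    refine Finset.sum_congr rfl fun K _ => ?_
    rw [pow_succ]
    field_simp
  · intro K _
    rw [MeasureTheory.integral_const_mul, ev_exp_piece hlam K]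

lemma loc_bond {s : ℝ} (hs : 0 < s) {x z : ℝ} (hx : 0 < x) (hz : 0 < z) (m n : ℕ) :
    (∫ a in Set.Ioo 0 x, (1 - a/x)^(2*s-1)/a
        * ((x-a)^m * dfac s m * ((z+a)^n * dfac s n) - x^m * dfac s m * (z^n * dfac s n)))
    + (∫ a in Set.Ioo 0 z, (1 - a/z)^(2*s-1)/a
        * ((x+a)^m * dfac s m * ((z-a)^n * dfac s n) - x^m * dfac s m * (z^n * dfac s n)))
    = (∑ k ∈ Finset.Icc 1 m, phi s k m
        * (x^(m-k) * dfac s (m-k) * (z^(n+k) * dfac s (n+k))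
            - x^m * dfac s m * (z^n * dfac s n)))
    + (∑ k ∈ Finset.Icc 1 n, phi s k n
        * (x^(m+k) * dfac s (m+k) * (z^(n-k) * dfac s (n-k))
            - x^m * dfac s m * (z^n * dfac s n))) := by
  -- rewrite the two integrands, pulling out the constant dfac factors
  have e1 : (fun a => (1 - a/x)^(2*s-1)/a
        * ((x-a)^m * dfac s m * ((z+a)^n * dfac s n) - x^m * dfac s m * (z^n * dfac s n)))
      = fun a => (dfac s m * dfac s n)
          * ((1 - a/x)^(2*s-1)/a * ((x-a)^m * (z+a)^n - x^m * z^n)) := by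
    funext a; ring
  have e2 : (fun a => (1 - a/z)^(2*s-1)/a
        * ((x+a)^m * dfac s m * ((z-a)^n * dfac s n) - x^m * dfac s m * (z^n * dfac s n)))
      = fun a => (dfac s m * dfac s n)
          * ((1 - a/z)^(2*s-1)/a * ((z-a)^n * (x+a)^m - z^n * x^m)) := by
    funext a; ring
  rw [e1, e2, MeasureTheory.integral_const_mul, MeasureTheory.integral_const_mul,
    ev_bulk (z := z) hs hx m n, ev_bulk (z := x) hs hz n m]
  -- rewrite the right-hand side sums
  have rhs1 : ∀ (p q : ℕ) (G : ℕ → ℝ),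
      (∑ k ∈ Finset.Icc 1 p, phi s k p * (G k - x^m * dfac s m * (z^n * dfac s n)))
        = (∑ k ∈ Finset.Icc 1 p, phi s k p * G k)
          - (∑ j ∈ Finset.range p, 1/(2*s + (j:ℝ))) * (x^m * dfac s m * (z^n * dfac s n)) := by
    intro p q G
    rw [← alg2 hs p, Finset.sum_mul, ← Finset.sum_sub_distrib]
    refine Finset.sum_congr rfl fun k _ => by ring
  rw [rhs1 m 0, rhs1 n 0]
  have haveX : dfac s m * dfac s n * (∑ K ∈ Finset.range n,
        (n.choose (K+1):ℝ) * z^(n-(K+1)) * x^(m+(K+1)) * bcoef (K+1) (2*s + (m:ℝ)))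
      = ∑ k ∈ Finset.Icc 1 n, phi s k n
          * (x^(m+k) * dfac s (m+k) * (z^(n-k) * dfac s (n-k))) := by
    rw [sum_Icc_one, Finset.mul_sum]
    refine Finset.sum_congr rfl fun K hK => ?_
    rw [Finset.mem_range] at hK
    have h := key_bond hs (m := m) (Nat.le_add_left 1 K) hK
    linear_combination (x^(m+(K+1)) * z^(n-(K+1))) * h
  have haveZ : dfac s m * dfac s n * (∑ K ∈ Finset.range m,
        (m.choose (K+1):ℝ) * x^(m-(K+1)) * z^(n+(K+1)) * bcoef (K+1) (2*s + (n:ℝ)))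
      = ∑ k ∈ Finset.Icc 1 m, phi s k m
          * (x^(m-k) * dfac s (m-k) * (z^(n+k) * dfac s (n+k))) := by
    rw [sum_Icc_one, Finset.mul_sum]
    refine Finset.sum_congr rfl fun K hK => ?_
    rw [Finset.mem_range] at hK
    have h := key_bond hs (m := n) (Nat.le_add_left 1 K) hK
    linear_combination (z^(n+(K+1)) * x^(m-(K+1))) * h
  linear_combination haveX + haveZ

lemma loc_left {s lam : ℝ} (hs : 0 < s) (hlam : 0 < lam) {x : ℝ} (hx : 0 < x) (m : ℕ) :
    (∫ a in Set.Ioo 0 x, (1 - a/x)^(2*s-1)/a * ((x-a)^m * dfac s m - x^m * dfac s m))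
    + (∫ a in Set.Ioi 0, Real.exp (-(lam*a))/a * ((x+a)^m * dfac s m - x^m * dfac s m))
    = ∑ k ∈ Finset.Icc 1 m, phi s k m
        * ((1/lam)^k * (x^(m-k) * dfac s (m-k)) - x^m * dfac s m) := by
  have e1 : (fun a => (1 - a/x)^(2*s-1)/a * ((x-a)^m * dfac s m - x^m * dfac s m))
      = fun a => dfac s m * ((1 - a/x)^(2*s-1)/a * ((x-a)^m - x^m)) := by
    funext a; ring
  have e2 : (fun a => Real.exp (-(lam*a))/a * ((x+a)^m * dfac s m - x^m * dfac s m))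
      = fun a => dfac s m * (Real.exp (-(lam*a))/a * ((x+a)^m - x^m)) := by
    funext a; ring
  rw [e1, e2, MeasureTheory.integral_const_mul, MeasureTheory.integral_const_mul,
    ev_loss hs hx m, ev_gain x hlam m]
  have rhs1 : (∑ k ∈ Finset.Icc 1 m, phi s k m
        * ((1/lam)^k * (x^(m-k) * dfac s (m-k)) - x^m * dfac s m))
      = (∑ k ∈ Finset.Icc 1 m, phi s k m * ((1/lam)^k * (x^(m-k) * dfac s (m-k))))
        - (∑ j ∈ Finset.range m, 1/(2*s + (j:ℝ))) * (x^m * dfac s m) := by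
    rw [← alg2 hs m, Finset.sum_mul, ← Finset.sum_sub_distrib]
    refine Finset.sum_congr rfl fun k _ => by ring
  rw [rhs1]
  have hgain : dfac s m * (∑ K ∈ Finset.range m,
        (m.choose (K+1):ℝ) * x^(m-(K+1)) * (K.factorial:ℝ) * (1/lam)^(K+1))
      = ∑ k ∈ Finset.Icc 1 m, phi s k m * ((1/lam)^k * (x^(m-k) * dfac s (m-k))) := by
    rw [sum_Icc_one, Finset.mul_sum]
    refine Finset.sum_congr rfl fun K hK => ?_
    rw [Finset.mem_range] at hK
    have h := phi_mul_dfac_sub hs (k := K+1) (n := m) (Nat.le_add_left 1 K) hK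
    simp only [Nat.add_sub_cancel] at h
    linear_combination (-((1/lam)^(K+1) * x^(m-(K+1)))) * h
  linear_combination hgain

section Helpers

lemma get_eq (y : Fin N → ℝ) {i : ℕ} (h : i < N) : get y i = y ⟨i, h⟩ := dif_pos h

lemma upd_apply_eq (y : Fin N → ℝ) {i : ℕ} (v : ℝ) {j : Fin N} (h : (j:ℕ) = i) :
    upd y i v j = v := if_pos h

lemma upd_apply_ne (y : Fin N → ℝ) {i : ℕ} (v : ℝ) {j : Fin N} (h : (j:ℕ) ≠ i) :
    upd y i v j = y j := if_neg h

variable {M : ℕ}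

lemma getN_eq (xi : Fin M → ℕ) {i : ℕ} (h : i < M) : getN xi i = xi ⟨i,h⟩ := dif_pos h

lemma getN_updN_eq (xi : Fin M → ℕ) {i : ℕ} (v : ℕ) (h : i < M) :
    getN (updN xi i v) i = v := by
  rw [getN_eq _ h]
  exact if_pos rfl

lemma getN_updN_ne (xi : Fin M → ℕ) {i j : ℕ} (v : ℕ) (h : j ≠ i) :
    getN (updN xi i v) j = getN xi j := by
  rcases lt_or_ge j M with hj | hj
  · rw [getN_eq _ hj, getN_eq _ hj]
    exact if_neg h
  · unfold getN
    rw [dif_neg (not_lt.2 hj), dif_neg (not_lt.2 hj)]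

lemma prod_split₁ (u : Fin N) (f : Fin N → ℝ) :
    ∏ j, f j = f u * ∏ j ∈ Finset.univ.erase u, f j :=
  (Finset.mul_prod_erase _ f (Finset.mem_univ u)).symm

lemma prod_split₂ {u v : Fin N} (huv : u ≠ v) (f : Fin N → ℝ) :
    ∏ j, f j = f u * f v * ∏ j ∈ (Finset.univ.erase u).erase v, f j := by
  rw [prod_split₁ u f, ← Finset.mul_prod_erase _ f
    (show v ∈ Finset.univ.erase u from Finset.mem_erase.2 ⟨huv.symm, Finset.mem_univ v⟩),
    mul_assoc]

end Helpers

/-- The left-reservoir part of the duality. -/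
lemma left_part (N : ℕ) (hN : 1 ≤ N) (s lamL lamR : ℝ)
    (hs : 0 < s) (hL : 0 < lamL) (hR : 0 < lamR)
    (y : Fin N → ℝ) (hy : ∀ i, 0 < y i) (xi : Fin (N + 2) → ℕ) :
    leftGen s lamL (fun z => dualityFun s lamL lamR N z xi) y
      = dualHop s 1 0 (fun z => dualityFun s lamL lamR N y z) xi := by
  have h0N : 0 < N := hN
  set u0 : Fin N := ⟨0, h0N⟩ with hu0
  have hget0 : get y 0 = y u0 := get_eq y h0N
  set x := y u0 with hxdef
  have hx : 0 < x := hy u0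
  set m := getN xi 1 with hm
  set R := (1/lamL)^(getN xi 0) * (1/lamR)^(getN xi (N+1)) *
    ∏ j ∈ Finset.univ.erase u0,
      (y j ^ (getN xi (j.1+1)) *
        (Real.Gamma (2*s) / Real.Gamma (2*s + (getN xi (j.1+1) : ℕ)))) with hR
  -- continuous side evaluation
  have claimA : ∀ v : ℝ, dualityFun s lamL lamR N (upd y 0 v) xi
      = R * (v^m * dfac s m) := by
    intro v
    rw [dualityFun, prod_split₁ u0]
    have h1 : upd y 0 v u0 = v := upd_apply_eq y v rfl
    have h2 : ∏ j ∈ Finset.univ.erase u0,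
        ((upd y 0 v) j ^ (getN xi (j.1+1)) *
          (Real.Gamma (2*s) / Real.Gamma (2*s + (getN xi (j.1+1) : ℕ))))
        = ∏ j ∈ Finset.univ.erase u0,
        (y j ^ (getN xi (j.1+1)) *
          (Real.Gamma (2*s) / Real.Gamma (2*s + (getN xi (j.1+1) : ℕ)))) := by
      refine Finset.prod_congr rfl fun j hj => ?_
      have hj0 : (j:ℕ) ≠ 0 := by
        intro hc
        exact (Finset.mem_erase.1 hj).1 (Fin.ext hc)
      rw [upd_apply_ne y v hj0]
    rw [h1, h2, hR, dfac]
    ring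
  have hupd_id : upd y 0 (y u0) = y := by
    funext j
    by_cases hj : (j:ℕ) = 0
    · rw [upd_apply_eq y _ hj]
      congr 1
      exact (Fin.ext hj).symm
    · exact upd_apply_ne y _ hj
  have claimA' : dualityFun s lamL lamR N y xi = R * (x^m * dfac s m) := by
    rw [← hupd_id, claimA (y u0)]
  -- dual side evaluation
  have claimB : ∀ k : ℕ, dualityFun s lamL lamR N y (moveN xi 1 0 k)
      = R * ((1/lamL)^k * (x^(m-k) * dfac s (m-k))) := by
    intro k
    have hg0 : getN (moveN xi 1 0 k) 0 = getN xi 0 + k := by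
      rw [moveN, getN_updN_eq _ _ (by omega)]
    have hgt : ∀ t : ℕ, t ≠ 0 → t ≠ 1 → getN (moveN xi 1 0 k) t = getN xi t := by
      intro t ht0 ht1
      rw [moveN, getN_updN_ne _ _ ht0, getN_updN_ne _ _ ht1]
    have hg1 : getN (moveN xi 1 0 k) 1 = m - k := by
      rw [moveN, getN_updN_ne _ _ (by omega), getN_updN_eq _ _ (by omega)]
    rw [dualityFun, prod_split₁ u0]
    have h2 : ∏ j ∈ Finset.univ.erase u0,
        (y j ^ (getN (moveN xi 1 0 k) (j.1+1)) *
          (Real.Gamma (2*s) / Real.Gamma (2*s + (getN (moveN xi 1 0 k) (j.1+1) : ℕ))))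
        = ∏ j ∈ Finset.univ.erase u0,
        (y j ^ (getN xi (j.1+1)) *
          (Real.Gamma (2*s) / Real.Gamma (2*s + (getN xi (j.1+1) : ℕ)))) := by
      refine Finset.prod_congr rfl fun j hj => ?_
      have hj0 : (j:ℕ) ≠ 0 := fun hc => (Finset.mem_erase.1 hj).1 (Fin.ext hc)
      rw [hgt (j.1+1) (by omega) (by omega)]
    have hu01 : (u0.1+1 : ℕ) = 1 := rfl
    rw [h2, hu01, hg0, hg1, hgt (N+1) (by omega) (by omega), pow_add, hR, dfac]
    ring
  -- assemble
  rw [leftGen, hget0]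
  have eint1 : (fun a => (1 - a / y u0)^(2*s-1)/a
        * (dualityFun s lamL lamR N (upd y 0 (y u0 - a)) xi - dualityFun s lamL lamR N y xi))
      = fun a => R * ((1 - a/x)^(2*s-1)/a * ((x-a)^m * dfac s m - x^m * dfac s m)) := by
    funext a
    rw [claimA (y u0 - a), claimA', hxdef]
    ring
  have eint2 : (fun a => Real.exp (-(lamL*a))/a
        * (dualityFun s lamL lamR N (upd y 0 (y u0 + a)) xi - dualityFun s lamL lamR N y xi))
      = fun a => R * (Real.exp (-(lamL*a))/a * ((x+a)^m * dfac s m - x^m * dfac s m)) := by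
    funext a
    rw [claimA (y u0 + a), claimA', hxdef]
    ring
  rw [eint1, eint2, MeasureTheory.integral_const_mul, MeasureTheory.integral_const_mul,
    ← mul_add, loc_left hs hL hx m]
  rw [dualHop, ← hm, Finset.mul_sum]
  refine Finset.sum_congr rfl fun k _ => ?_
  rw [claimB k, claimA']
  ring

/-- The bulk part of the duality, for the bond `(i, i+1)`. -/
lemma bulk_part (N : ℕ) (hN : 1 ≤ N) (s lamL lamR : ℝ)
    (hs : 0 < s) (hL : 0 < lamL) (hR : 0 < lamR)
    (y : Fin N → ℝ) (hy : ∀ i, 0 < y i) (xi : Fin (N + 2) → ℕ)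
    (i : ℕ) (hi : i < N - 1) :
    bulkGen s i (fun z => dualityFun s lamL lamR N z xi) y
      = dualHop s (i+1) (i+2) (fun z => dualityFun s lamL lamR N y z) xi
        + dualHop s (i+2) (i+1) (fun z => dualityFun s lamL lamR N y z) xi := by
  have hiN : i < N := by omega
  have hi1N : i+1 < N := by omega
  set ui : Fin N := ⟨i, hiN⟩ with hui
  set vi : Fin N := ⟨i+1, hi1N⟩ with hvi
  have huv : ui ≠ vi := by
    intro hc
    have := congrArg (·.1) hc
    simp [hui, hvi] at this
  set x := y ui with hxdef
  set z := y vi with hzdef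
  have hx : 0 < x := hy ui
  have hz : 0 < z := hy vi
  set m := getN xi (i+1) with hm
  set n := getN xi (i+2) with hn
  set R := (1/lamL)^(getN xi 0) * (1/lamR)^(getN xi (N+1)) *
    ∏ j ∈ (Finset.univ.erase ui).erase vi,
      (y j ^ (getN xi (j.1+1)) *
        (Real.Gamma (2*s) / Real.Gamma (2*s + (getN xi (j.1+1) : ℕ)))) with hR
  have claimA : ∀ v w : ℝ, dualityFun s lamL lamR N (upd (upd y i v) (i+1) w) xi
      = R * (v^m * dfac s m * (w^n * dfac s n)) := by
    intro v w
    rw [dualityFun, prod_split₂ huv]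
    have h1 : upd (upd y i v) (i+1) w ui = v := by
      rw [upd_apply_ne _ _ (show (ui:ℕ) ≠ i+1 by simp [hui]),
        upd_apply_eq _ _ (show (ui:ℕ) = i from rfl)]
    have h1' : upd (upd y i v) (i+1) w vi = w :=
      upd_apply_eq _ _ (show (vi:ℕ) = i+1 from rfl)
    have h2 : ∏ j ∈ (Finset.univ.erase ui).erase vi,
        ((upd (upd y i v) (i+1) w) j ^ (getN xi (j.1+1)) *
          (Real.Gamma (2*s) / Real.Gamma (2*s + (getN xi (j.1+1) : ℕ))))
        = ∏ j ∈ (Finset.univ.erase ui).erase vi,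
        (y j ^ (getN xi (j.1+1)) *
          (Real.Gamma (2*s) / Real.Gamma (2*s + (getN xi (j.1+1) : ℕ)))) := by
      refine Finset.prod_congr rfl fun j hj => ?_
      obtain ⟨hjv, hju⟩ := Finset.mem_erase.1 hj
      replace hju := (Finset.mem_erase.1 hju).1
      have hji : (j:ℕ) ≠ i := fun hc => hju (Fin.ext hc)
      have hji1 : (j:ℕ) ≠ i+1 := fun hc => hjv (Fin.ext hc)
      rw [upd_apply_ne _ _ hji1, upd_apply_ne _ _ hji]
    have hidx1 : (ui.1+1 : ℕ) = i+1 := rfl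
    have hidx2 : (vi.1+1 : ℕ) = i+2 := rfl
    rw [h1, h1', h2, hidx1, hidx2, hR, dfac, dfac]
    ring
  have hupd_id : upd (upd y i (y ui)) (i+1) (y vi) = y := by
    funext j
    by_cases h1 : (j:ℕ) = i+1
    · rw [upd_apply_eq _ _ h1]
      congr 1
      exact (Fin.ext h1).symm
    · rw [upd_apply_ne _ _ h1]
      by_cases h2 : (j:ℕ) = i
      · rw [upd_apply_eq _ _ h2]
        congr 1
        exact (Fin.ext h2).symm
      · exact upd_apply_ne _ _ h2
  have claimA' : dualityFun s lamL lamR N y xi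
      = R * (x^m * dfac s m * (z^n * dfac s n)) := by
    rw [← hupd_id, claimA (y ui) (y vi)]
  have hcomm : ∀ v w : ℝ, upd (upd y (i+1) w) i v = upd (upd y i v) (i+1) w := by
    intro v w
    funext j
    by_cases h1 : (j:ℕ) = i
    · rw [upd_apply_eq _ _ h1, upd_apply_ne _ _ (show (j:ℕ) ≠ i+1 by omega),
        upd_apply_eq _ _ h1]
    · rw [upd_apply_ne _ _ h1]
      by_cases h2 : (j:ℕ) = i+1
      · rw [upd_apply_eq _ _ h2, upd_apply_eq _ _ h2]
      · rw [upd_apply_ne _ _ h2, upd_apply_ne _ _ h2, upd_apply_ne _ _ h1]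
  have claimB1 : ∀ k : ℕ, dualityFun s lamL lamR N y (moveN xi (i+1) (i+2) k)
      = R * (x^(m-k) * dfac s (m-k) * (z^(n+k) * dfac s (n+k))) := by
    intro k
    have hgt : ∀ t : ℕ, t ≠ i+1 → t ≠ i+2 → getN (moveN xi (i+1) (i+2) k) t = getN xi t := by
      intro t h1 h2
      rw [moveN, getN_updN_ne _ _ h2, getN_updN_ne _ _ h1]
    have hg1 : getN (moveN xi (i+1) (i+2) k) (i+1) = m - k := by
      rw [moveN, getN_updN_ne _ _ (by omega), getN_updN_eq _ _ (by omega)]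
    have hg2 : getN (moveN xi (i+1) (i+2) k) (i+2) = n + k := by
      rw [moveN, ← hn, getN_updN_eq _ _ (by omega)]
    rw [dualityFun, prod_split₂ huv]
    have h2 : ∏ j ∈ (Finset.univ.erase ui).erase vi,
        (y j ^ (getN (moveN xi (i+1) (i+2) k) (j.1+1)) *
          (Real.Gamma (2*s) / Real.Gamma (2*s + (getN (moveN xi (i+1) (i+2) k) (j.1+1) : ℕ))))
        = ∏ j ∈ (Finset.univ.erase ui).erase vi,
        (y j ^ (getN xi (j.1+1)) *
          (Real.Gamma (2*s) / Real.Gamma (2*s + (getN xi (j.1+1) : ℕ)))) := by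
      refine Finset.prod_congr rfl fun j hj => ?_
      obtain ⟨hjv, hju⟩ := Finset.mem_erase.1 hj
      replace hju := (Finset.mem_erase.1 hju).1
      have hji : (j:ℕ) ≠ i := fun hc => hju (Fin.ext hc)
      have hji1 : (j:ℕ) ≠ i+1 := fun hc => hjv (Fin.ext hc)
      rw [hgt (j.1+1) (by omega) (by omega)]
    have hidx1 : (ui.1+1 : ℕ) = i+1 := rfl
    have hidx2 : (vi.1+1 : ℕ) = i+2 := rfl
    rw [h2, hidx1, hidx2, hg1, hg2, hgt 0 (by omega) (by omega),
      hgt (N+1) (by omega) (by omega), hR, dfac, dfac]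
    ring
  have claimB2 : ∀ k : ℕ, dualityFun s lamL lamR N y (moveN xi (i+2) (i+1) k)
      = R * (x^(m+k) * dfac s (m+k) * (z^(n-k) * dfac s (n-k))) := by
    intro k
    have hgt : ∀ t : ℕ, t ≠ i+1 → t ≠ i+2 → getN (moveN xi (i+2) (i+1) k) t = getN xi t := by
      intro t h1 h2
      rw [moveN, getN_updN_ne _ _ h1, getN_updN_ne _ _ h2]
    have hg1 : getN (moveN xi (i+2) (i+1) k) (i+1) = m + k := by
      rw [moveN, ← hm, getN_updN_eq _ _ (by omega)]
    have hg2 : getN (moveN xi (i+2) (i+1) k) (i+2) = n - k := by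
      rw [moveN, getN_updN_ne _ _ (by omega), getN_updN_eq _ _ (by omega)]
    rw [dualityFun, prod_split₂ huv]
    have h2 : ∏ j ∈ (Finset.univ.erase ui).erase vi,
        (y j ^ (getN (moveN xi (i+2) (i+1) k) (j.1+1)) *
          (Real.Gamma (2*s) / Real.Gamma (2*s + (getN (moveN xi (i+2) (i+1) k) (j.1+1) : ℕ))))
        = ∏ j ∈ (Finset.univ.erase ui).erase vi,
        (y j ^ (getN xi (j.1+1)) *
          (Real.Gamma (2*s) / Real.Gamma (2*s + (getN xi (j.1+1) : ℕ)))) := by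
      refine Finset.prod_congr rfl fun j hj => ?_
      obtain ⟨hjv, hju⟩ := Finset.mem_erase.1 hj
      replace hju := (Finset.mem_erase.1 hju).1
      have hji : (j:ℕ) ≠ i := fun hc => hju (Fin.ext hc)
      have hji1 : (j:ℕ) ≠ i+1 := fun hc => hjv (Fin.ext hc)
      rw [hgt (j.1+1) (by omega) (by omega)]
    have hidx1 : (ui.1+1 : ℕ) = i+1 := rfl
    have hidx2 : (vi.1+1 : ℕ) = i+2 := rfl
    rw [h2, hidx1, hidx2, hg1, hg2, hgt 0 (by omega) (by omega),
      hgt (N+1) (by omega) (by omega), hR, dfac, dfac]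
    ring
  -- assemble
  rw [bulkGen, get_eq y hiN, get_eq y hi1N]
  have eint1 : (fun a => (1 - a / y ui)^(2*s-1)/a
        * (dualityFun s lamL lamR N (move y i (i+1) a) xi - dualityFun s lamL lamR N y xi))
      = fun a => R * ((1 - a/x)^(2*s-1)/a
          * ((x-a)^m * dfac s m * ((z+a)^n * dfac s n)
              - x^m * dfac s m * (z^n * dfac s n))) := by
    funext a
    rw [move, get_eq y hiN, get_eq y hi1N, claimA (y ui - a) (y vi + a), claimA',
      hxdef, hzdef]
    ring
  have eint2 : (fun a => (1 - a / y vi)^(2*s-1)/a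
        * (dualityFun s lamL lamR N (move y (i+1) i a) xi - dualityFun s lamL lamR N y xi))
      = fun a => R * ((1 - a/z)^(2*s-1)/a
          * ((x+a)^m * dfac s m * ((z-a)^n * dfac s n)
              - x^m * dfac s m * (z^n * dfac s n))) := by
    funext a
    rw [move, get_eq y hi1N, get_eq y hiN, hcomm, claimA (y ui + a) (y vi - a), claimA',
      hxdef, hzdef]
    ring
  rw [eint1, eint2, MeasureTheory.integral_const_mul, MeasureTheory.integral_const_mul,
    ← mul_add, loc_bond hs hx hz m n, mul_add]
  congr 1
  · rw [dualHop, ← hm, Finset.mul_sum]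
    refine Finset.sum_congr rfl fun k _ => ?_
    rw [claimB1 k, claimA']
    ring
  · rw [dualHop, ← hn, Finset.mul_sum]
    refine Finset.sum_congr rfl fun k _ => ?_
    rw [claimB2 k, claimA']
    ring

/-- The right-reservoir part of the duality. -/
lemma right_part (N : ℕ) (hN : 1 ≤ N) (s lamL lamR : ℝ)
    (hs : 0 < s) (hL : 0 < lamL) (hR : 0 < lamR)
    (y : Fin N → ℝ) (hy : ∀ i, 0 < y i) (xi : Fin (N + 2) → ℕ) :
    rightGen s lamR (fun z => dualityFun s lamL lamR N z xi) y
      = dualHop s N (N+1) (fun z => dualityFun s lamL lamR N y z) xi := by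
  have hNN : N - 1 < N := by omega
  set uN : Fin N := ⟨N-1, hNN⟩ with huN
  have hgetN : get y (N-1) = y uN := get_eq y hNN
  set x := y uN with hxdef
  have hx : 0 < x := hy uN
  have hidxN : (uN.1+1 : ℕ) = N := by simp [huN]; omega
  set m := getN xi N with hm
  set R := (1/lamL)^(getN xi 0) * (1/lamR)^(getN xi (N+1)) *
    ∏ j ∈ Finset.univ.erase uN,
      (y j ^ (getN xi (j.1+1)) *
        (Real.Gamma (2*s) / Real.Gamma (2*s + (getN xi (j.1+1) : ℕ)))) with hRR
  have claimA : ∀ v : ℝ, dualityFun s lamL lamR N (upd y (N-1) v) xi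
      = R * (v^m * dfac s m) := by
    intro v
    rw [dualityFun, prod_split₁ uN]
    have h1 : upd y (N-1) v uN = v := upd_apply_eq y v rfl
    have h2 : ∏ j ∈ Finset.univ.erase uN,
        ((upd y (N-1) v) j ^ (getN xi (j.1+1)) *
          (Real.Gamma (2*s) / Real.Gamma (2*s + (getN xi (j.1+1) : ℕ))))
        = ∏ j ∈ Finset.univ.erase uN,
        (y j ^ (getN xi (j.1+1)) *
          (Real.Gamma (2*s) / Real.Gamma (2*s + (getN xi (j.1+1) : ℕ)))) := by
      refine Finset.prod_congr rfl fun j hj => ?_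
      have hj0 : (j:ℕ) ≠ N-1 := fun hc => (Finset.mem_erase.1 hj).1 (Fin.ext hc)
      rw [upd_apply_ne y v hj0]
    rw [h1, h2, hidxN, hRR, dfac]
    ring
  have hupd_id : upd y (N-1) (y uN) = y := by
    funext j
    by_cases hj : (j:ℕ) = N-1
    · rw [upd_apply_eq y _ hj]
      congr 1
      exact (Fin.ext hj).symm
    · exact upd_apply_ne y _ hj
  have claimA' : dualityFun s lamL lamR N y xi = R * (x^m * dfac s m) := by
    rw [← hupd_id, claimA (y uN)]
  have claimB : ∀ k : ℕ, dualityFun s lamL lamR N y (moveN xi N (N+1) k)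
      = R * ((1/lamR)^k * (x^(m-k) * dfac s (m-k))) := by
    intro k
    have hgt : ∀ t : ℕ, t ≠ N → t ≠ N+1 → getN (moveN xi N (N+1) k) t = getN xi t := by
      intro t h1 h2
      rw [moveN, getN_updN_ne _ _ h2, getN_updN_ne _ _ h1]
    have hgR : getN (moveN xi N (N+1) k) (N+1) = getN xi (N+1) + k := by
      rw [moveN, getN_updN_eq _ _ (by omega)]
    have hg1 : getN (moveN xi N (N+1) k) N = m - k := by
      rw [moveN, getN_updN_ne _ _ (by omega), getN_updN_eq _ _ (by omega)]
    rw [dualityFun, prod_split₁ uN]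
    have h2 : ∏ j ∈ Finset.univ.erase uN,
        (y j ^ (getN (moveN xi N (N+1) k) (j.1+1)) *
          (Real.Gamma (2*s) / Real.Gamma (2*s + (getN (moveN xi N (N+1) k) (j.1+1) : ℕ))))
        = ∏ j ∈ Finset.univ.erase uN,
        (y j ^ (getN xi (j.1+1)) *
          (Real.Gamma (2*s) / Real.Gamma (2*s + (getN xi (j.1+1) : ℕ)))) := by
      refine Finset.prod_congr rfl fun j hj => ?_
      have hj0 : (j:ℕ) ≠ N-1 := fun hc => (Finset.mem_erase.1 hj).1 (Fin.ext hc)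
      have hjN : j.1+1 ≠ N := by
        have := j.2
        omega
      rw [hgt (j.1+1) hjN (by omega)]
    rw [h2, hidxN, hg1, hgR, hgt 0 (by omega) (by omega), pow_add, hRR, dfac]
    ring
  rw [rightGen, hgetN]
  have eint1 : (fun a => (1 - a / y uN)^(2*s-1)/a
        * (dualityFun s lamL lamR N (upd y (N-1) (y uN - a)) xi
            - dualityFun s lamL lamR N y xi))
      = fun a => R * ((1 - a/x)^(2*s-1)/a * ((x-a)^m * dfac s m - x^m * dfac s m)) := by
    funext a
    rw [claimA (y uN - a), claimA', hxdef]
    ring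
  have eint2 : (fun a => Real.exp (-(lamR*a))/a
        * (dualityFun s lamL lamR N (upd y (N-1) (y uN + a)) xi
            - dualityFun s lamL lamR N y xi))
      = fun a => R * (Real.exp (-(lamR*a))/a * ((x+a)^m * dfac s m - x^m * dfac s m)) := by
    funext a
    rw [claimA (y uN + a), claimA', hxdef]
    ring
  rw [eint1, eint2, MeasureTheory.integral_const_mul, MeasureTheory.integral_const_mul,
    ← mul_add, loc_left hs hR hx m]
  rw [dualHop, ← hm, Finset.mul_sum]
  refine Finset.sum_congr rfl fun k _ => ?_
  rw [claimB k, claimA']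
  ring

/-- Duality between the integrable heat conduction model and the absorbing harmonic process. -/
theorem duality (N : ℕ) (hN : 1 ≤ N) (s lamL lamR : ℝ)
    (hs : 0 < s) (hL : 0 < lamL) (hR : 0 < lamR)
    (y : Fin N → ℝ) (hy : ∀ i, 0 < y i) (xi : Fin (N + 2) → ℕ) :
    gen s lamL lamR (fun z => dualityFun s lamL lamR N z xi) y
      = dualGen s N (fun z => dualityFun s lamL lamR N y z) xi := by
  rw [gen, dualGen]
  congr 1
  congr 1
  · exact left_part N hN s lamL lamR hs hL hR y hy xi
  · exact Finset.sum_congr rfl fun i hi =>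
      bulk_part N hN s lamL lamR hs hL hR y hy xi i (Finset.mem_range.1 hi)
  · exact right_part N hN s lamL lamR hs hL hR y hy xi

end HeatModel
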